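/- For every complete sparse ruler R of length n − 1 (with n ≥ 1), there exists an alphabet A and an unbordered partial word w of length n over A such that D(w) = R; in fact the partial word v = v₀v₁…v_{n−1} over the alphabet R defined by v_i = i if i ∈ R and v_i = ⋄ otherwise is unbordered with D(v) = R. -/
import Mathlib


/-- The domain of a partial word (a list over `Option A`, where `none` is the hole):
the set of positions carrying a letter. -/
def PartialWord.domain {A : Type*} (w : List (Option A)) : Finset ℕ :=
  (Finset.range w.length).filter fun i => (w.getD i none).isSome

/-- Two partial words are compatible if they have the same length and agree on the
intersection of their domains. -/
def PartialWord.Compatible {A : Type*} (w v : List (Option A)) : Prop :=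
  w.length = v.length ∧
    ∀ i ∈ PartialWord.domain w ∩ PartialWord.domain v, w.getD i none = v.getD i none

/-- A partial word is unbordered if no nonempty proper prefix is compatible with a
suffix of the same length. -/
def PartialWord.Unbordered {A : Type*} (w : List (Option A)) : Prop :=
  ∀ x y : List (Option A), x <+: w → y <:+ w → x ≠ [] → x.length < w.length →
    x.length = y.length → ¬ PartialWord.Compatible x y

/-- The number of holes of a partial word. -/
def PartialWord.holes {A : Type*} (w : List (Option A)) : ℕ :=
  w.countP fun x => x.isNone

/-- `u` repeated `t` times. -/
def listPow {α : Type*} (u : List α) (t : ℕ) : List α := (List.replicate t u).flatten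

/-- A complete sparse ruler of length `n`. -/
def IsCompleteRuler (n : ℕ) (R : Finset ℕ) : Prop :=
  (∀ x ∈ R, x ≤ n) ∧ 0 ∈ R ∧ n ∈ R ∧ ∀ d ≤ n, ∃ r ∈ R, ∃ s ∈ R, r = s + d

/-- Minimum number of marks of a complete sparse ruler of length `n`. -/
noncomputable def M1 (n : ℕ) : ℕ :=
  sInf {k | ∃ R : Finset ℕ, IsCompleteRuler n R ∧ R.card = k}

/-- Maximum number of holes an unbordered partial word of length `n` over an alphabet
of size `k` can have. -/
noncomputable def HB (k n : ℕ) : ℕ :=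
  sSup {h | ∃ w : List (Option (Fin k)),
    w.length = n ∧ PartialWord.Unbordered w ∧ PartialWord.holes w = h}

/-- The ruler (set of partial sums) given by a difference representation. -/
def rulerOfDiffs (D : List ℕ) : Finset ℕ :=
  ((List.range (D.length + 1)).map fun t => (D.take t).sum).toFinset

/-- The difference representation of the extended Wichmann ruler `w₁(r,s,i,j)`. -/
def wichmannDiffs (r s i j : ℕ) : List ℕ :=
  List.replicate r 1 ++ [r + 1] ++ List.replicate r (2 * r + 1) ++
    List.replicate s (4 * r + 3) ++ List.replicate (r + 1) (2 * r + 2) ++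
    List.replicate r 1 ++ List.replicate i (r + 1) ++ [j]

/-- A complete two-dimensional sparse ruler: an `(n,m)`-ruler. -/
def IsRuler2 (n m : ℕ) (R : Finset (ℕ × ℕ)) : Prop :=
  (∀ p ∈ R, p.1 < n ∧ p.2 < m) ∧
    ∀ x y : ℤ, |x| ≤ (n : ℤ) - 1 → |y| ≤ (m : ℤ) - 1 →
      ∃ p ∈ R, ∃ q ∈ R, (p.1 : ℤ) - (q.1 : ℤ) = x ∧ (p.2 : ℤ) - (q.2 : ℤ) = y

/-- Minimum number of marks of an `(n,m)`-ruler. -/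
noncomputable def M2 (n m : ℕ) : ℕ :=
  sInf {k | ∃ R : Finset (ℕ × ℕ), IsRuler2 n m R ∧ R.card = k}

/-- The domain of an `n` by `m` two-dimensional partial word. -/
def domain2 {A : Type*} (n m : ℕ) (w : ℕ × ℕ → Option A) : Finset (ℕ × ℕ) :=
  (Finset.range n ×ˢ Finset.range m).filter fun p => (w p).isSome

/-- An `n` by `m` two-dimensional partial word is unbordered if its domain is an
`(n,m)`-ruler and every nonzero measurable vector can be measured between two
positions carrying distinct letters. -/
def Unbordered2 {A : Type*} (n m : ℕ) (w : ℕ × ℕ → Option A) : Prop :=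
  IsRuler2 n m (domain2 n m w) ∧
    ∀ x y : ℤ, |x| ≤ (n : ℤ) - 1 → |y| ≤ (m : ℤ) - 1 → ¬(x = 0 ∧ y = 0) →
      ∃ p ∈ domain2 n m w, ∃ q ∈ domain2 n m w,
        (p.1 : ℤ) - (q.1 : ℤ) = x ∧ (p.2 : ℤ) - (q.2 : ℤ) = y ∧ w p ≠ w q

/-- Number of holes of an `n` by `m` two-dimensional partial word. -/
def holes2 {A : Type*} (n m : ℕ) (w : ℕ × ℕ → Option A) : ℕ :=
  n * m - (domain2 n m w).card

/-- Maximum number of holes an unbordered `n` by `m` two-dimensional partial word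
over an alphabet of size `k` can have. -/
noncomputable def HB2 (k n m : ℕ) : ℕ :=
  sSup {h | ∃ w : ℕ × ℕ → Option (Fin k), Unbordered2 n m w ∧ holes2 n m w = h}
/-- For every complete sparse ruler `R` of length `n - 1` (with `n ≥ 1`)
there is an alphabet `A` and an unbordered partial word of length `n` over `A` whose
domain is `R`; in fact the partial word `v` over the alphabet `R` (here: with letters the
natural numbers belonging to `R`) defined by `vᵢ = i` if `i ∈ R` and `vᵢ = ⋄` otherwise
is unbordered with `D(v) = R`. -/
theorem exists_unbordered_of_completeRuler (n : ℕ) (hn : 1 ≤ n) (R : Finset ℕ)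
    (hR : IsCompleteRuler (n - 1) R) :
    (∃ (A : Type) (w : List (Option A)),
        w.length = n ∧ PartialWord.Unbordered w ∧ PartialWord.domain w = R) ∧
    PartialWord.Unbordered
      ((List.range n).map fun i => if i ∈ R then some i else (none : Option ℕ)) ∧
    PartialWord.domain
      ((List.range n).map fun i => if i ∈ R then some i else (none : Option ℕ)) = R := by
  set f : ℕ → Option ℕ := fun i => if i ∈ R then some i else (none : Option ℕ) with hf
  set v : List (Option ℕ) := (List.range n).map f with hv
  have hlenv : v.length = n := by simp [hv]
  have hget : ∀ i, i < n → v.getD i none = f i := by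
    intro i hi
    rw [hv, List.getD_eq_getElem _ _ (by simpa using hi)]
    simp
  obtain ⟨hble, h0, hn1, hdiff⟩ := hR
  have hRlt : ∀ x ∈ R, x < n := fun x hx => lt_of_le_of_lt (hble x hx) (by omega)
  have hdom : PartialWord.domain v = R := by
    ext i
    simp only [PartialWord.domain, Finset.mem_filter, Finset.mem_range, hlenv]
    constructor
    · rintro ⟨hi, hs⟩
      rw [hget i hi] at hs
      by_contra h
      simp [hf, h] at hs
    · intro hi
      refine ⟨hRlt i hi, ?_⟩
      rw [hget i (hRlt i hi)]
      simp [hf, hi]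
  have hunb : PartialWord.Unbordered v := by
    intro x y hx hy hne hlt hxy hcomp
    obtain ⟨-, hagree⟩ := hcomp
    set ℓ := x.length with hℓ
    have hℓpos : 0 < ℓ := List.length_pos_iff.mpr hne
    have hℓn : ℓ < n := by rwa [hlenv] at hlt
    set d := n - ℓ with hd
    obtain ⟨r, hr, s, hs, hrs⟩ := hdiff d (by omega)
    have hrn := hble r hr
    have hsℓ : s < ℓ := by omega
    obtain ⟨t, ht⟩ := hx
    obtain ⟨u, hu⟩ := hy
    have hylen : y.length = ℓ := hxy.symm
    have hulen : u.length = d := by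
      have := congrArg List.length hu
      simp [hlenv, hylen] at this
      omega
    have hxs : x.getD s none = v.getD s none := by
      rw [← ht, List.getD_eq_getElem?_getD, List.getD_eq_getElem?_getD,
        List.getElem?_append_left hsℓ]
    have hys : y.getD s none = v.getD (d + s) none := by
      rw [← hu, List.getD_eq_getElem?_getD, List.getD_eq_getElem?_getD,
        List.getElem?_append_right (by omega : u.length ≤ d + s),
        show d + s - u.length = s from by omega]
    have hvs : v.getD s none = some s := by
      rw [hget s (by omega)]; simp [hf, hs]
    have hrR : d + s ∈ R := by rw [show d + s = r from by omega]; exact hr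
    have hvds : v.getD (d + s) none = some (d + s) := by
      rw [hget (d + s) (hRlt _ hrR)]; simp [hf, hrR]
    have hmem : s ∈ PartialWord.domain x ∩ PartialWord.domain y := by
      simp only [Finset.mem_inter, PartialWord.domain, Finset.mem_filter,
        Finset.mem_range, hylen]
      exact ⟨⟨hsℓ, by rw [hxs, hvs]; rfl⟩, ⟨hsℓ, by rw [hys, hvds]; rfl⟩⟩
    have := hagree s hmem
    rw [hxs, hvs, hys, hvds] at this
    have : s = d + s := Option.some.inj this
    omega
  exact ⟨⟨ℕ, v, hlenv, hunb, hdom⟩, hunb, hdom⟩
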